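/- The frequency of the letter X in the fixed point u is 1/2: the sequence N ↦ (#{i < N : u i = X}) / N (as real numbers) tends to 1/2 as N → ∞. Thus, for a large portion of the pattern, the ratio of the numbers of the two kinds of letters approaches unity. -/

import Mathlib

open Filter

theorem fixed_point_letter_frequency
    (u : ℕ → Bool)
    (h0 : ∀ n, u (3 * n) = false)
    (h1 : ∀ n, u (3 * n + 1) = !(u n))
    (h2 : ∀ n, u (3 * n + 2) = true) :
    Tendsto
      (fun N : ℕ =>
        (((Finset.range N).filter (fun i => u i = false)).card : ℝ) / (N : ℝ))
      atTop (nhds (1 / 2)) := by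
  set c : ℕ → ℕ := fun N => ((Finset.range N).filter (fun i => u i = false)).card with hc
  have hle : ∀ N, c N ≤ N := by
    intro N
    calc c N ≤ (Finset.range N).card := Finset.card_filter_le _ _
    _ = N := Finset.card_range N
  have hstep : ∀ N, c (N + 1) = c N + (if u N = false then 1 else 0) := by
    intro N
    simp only [hc, Finset.range_add_one, Finset.filter_insert]
    split
    · rw [Finset.card_insert_of_notMem (by simp)]
    · simp
  have hB : ∀ m, c (3 * m) + c m = 2 * m := by
    intro m
    induction m with
    | zero => simp [hc]
    | succ m ih =>
      have e3 : 3 * (m + 1) = 3 * m + 2 + 1 := by ring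
      rw [e3, hstep, h2]
      have e2 : 3 * m + 2 = 3 * m + 1 + 1 := by ring
      rw [e2, hstep, h1, hstep, h0, hstep]
      cases hum : u m <;> simp [hum] at * <;> omega
  have hmono : ∀ a b, a ≤ b → c a ≤ c b ∧ c b ≤ c a + (b - a) := by
    intro a b hab
    constructor
    · exact Finset.card_le_card (Finset.filter_subset_filter _
        (Finset.range_subset_range.2 hab))
    · obtain ⟨j, rfl⟩ := Nat.exists_eq_add_of_le hab
      clear hab
      induction j with
      | zero => simp
      | succ j ih =>
        rw [← Nat.add_assoc, hstep]
        split <;> omega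
  -- the integer discrepancy
  set E : ℕ → ℤ := fun N => 2 * (c N : ℤ) - N with hE
  have hD : ∀ N, |E N + E (N / 3)| ≤ 2 := by
    intro N
    set m := N / 3 with hm
    have hr : N % 3 < 3 := Nat.mod_lt _ (by norm_num)
    have hNeq : 3 * m + N % 3 = N := by omega
    have h3m : 3 * m ≤ N := by omega
    have hmono' := hmono (3 * m) N h3m
    have hBm := hB m
    simp only [hE]
    rw [abs_le]
    constructor <;> omega
  have hEbound : ∀ k : ℕ, ∀ N, N < 3 ^ k → |E N| ≤ 2 * (k : ℤ) := by
    intro k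
    induction k with
    | zero =>
      intro N hN
      interval_cases N
      simp [hE, hc]
    | succ k ih =>
      intro N hN
      have hdiv : N / 3 < 3 ^ k := by
        rw [Nat.div_lt_iff_lt_mul (by norm_num)]
        calc N < 3 ^ (k + 1) := hN
        _ = 3 ^ k * 3 := by ring
      have h1' := ih _ hdiv
      have h2' := hD N
      have : |E N| ≤ |E N + E (N / 3)| + |E (N / 3)| := by
        have h := abs_add_le (E N + E (N / 3)) (-E (N / 3))
        simpa using h
      push_cast
      push_cast at h1'
      linarith
  -- final bound: for N ≥ 1, |c N / N - 1/2| ≤ (2/3)^(Nat.log 3 N)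
  have key : ∀ N : ℕ, 1 ≤ N →
      |(c N : ℝ) / N - 1 / 2| ≤ ((2 : ℝ) / 3) ^ (Nat.log 3 N) := by
    intro N hN
    have hN0 : (0 : ℝ) < N := by exact_mod_cast hN
    set k := Nat.log 3 N with hk
    have hpow : (3 : ℕ) ^ k ≤ N := Nat.pow_log_le_self 3 (by omega)
    have hlt : N < 3 ^ (k + 1) := Nat.lt_pow_succ_log_self (by norm_num) N
    have hEb : |E N| ≤ 2 * ((k : ℤ) + 1) := by
      have := hEbound (k + 1) N hlt
      push_cast at this ⊢
      linarith
    have hEb' : |(E N : ℝ)| ≤ 2 * ((k : ℝ) + 1) := by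
      rw [← Int.cast_abs]
      exact_mod_cast hEb
    have step1 : |(c N : ℝ) / N - 1 / 2| = |(E N : ℝ)| / (2 * N) := by
      have h : (c N : ℝ) / N - 1 / 2 = (E N : ℝ) / (2 * N) := by
        simp only [hE]
        push_cast
        field_simp
      rw [h, abs_div, abs_of_pos (show (0:ℝ) < 2 * N by positivity)]
    rw [step1]
    have h2pow : (k + 1 : ℝ) ≤ 2 ^ k := by
      exact_mod_cast (Nat.lt_two_pow_self (n := k))
    have hpowR : (3 : ℝ) ^ k ≤ N := by exact_mod_cast hpow
    calc |(E N : ℝ)| / (2 * N) ≤ (2 * ((k : ℝ) + 1)) / (2 * N) := by gcongr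
    _ = ((k : ℝ) + 1) / N := by
          rw [mul_div_mul_left _ _ (two_ne_zero)]
    _ ≤ 2 ^ k / 3 ^ k := by
          apply div_le_div₀ (by positivity) h2pow (by positivity) hpowR
    _ = ((2 : ℝ) / 3) ^ k := by rw [div_pow]
  -- limit of the bound
  have hlog : Tendsto (fun N => Nat.log 3 N) atTop atTop := by
    apply tendsto_atTop_atTop.2
    intro b
    refine ⟨3 ^ b, fun n hn => ?_⟩
    calc b = Nat.log 3 (3 ^ b) := (Nat.log_pow (by norm_num) b).symm
    _ ≤ Nat.log 3 n := Nat.log_mono_right hn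
  have hbound : Tendsto (fun N : ℕ => ((2 : ℝ) / 3) ^ (Nat.log 3 N)) atTop (nhds 0) :=
    (tendsto_pow_atTop_nhds_zero_of_lt_one (by norm_num) (by norm_num)).comp hlog
  rw [← tendsto_sub_nhds_zero_iff]
  apply squeeze_zero_norm' _ hbound
  filter_upwards [eventually_ge_atTop 1] with N hN
  simpa using key N hN
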